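/- If b(x)/x → λ as x → 0⁺ for some λ ∈ (0, ∞), then β·C(β) → 1/(λ·a) as β → 0⁺. -/

import Mathlib

open MeasureTheory Real Filter Set

/-- `C(β) = ∫₀¹ (1-x)⁻¹ exp(-∫₀ˣ b(aβy)/(1-y) dy) dx`. -/
noncomputable def Cfun (a : ℝ) (b : ℝ → ℝ) (β : ℝ) : ℝ :=
  ∫ x in (0:ℝ)..1, (1 - x)⁻¹ * Real.exp (-∫ y in (0:ℝ)..x, b (a * β * y) / (1 - y))

private lemma integral_inv_one_sub {s t : ℝ} (hst : s ≤ t) (ht : t < 1) :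
    ∫ y in s..t, (1 - y)⁻¹ = Real.log (1 - s) - Real.log (1 - t) := by
  have h1 : (0:ℝ) < 1 - t := by linarith
  have h2 : (0:ℝ) < 1 - s := by linarith
  have h := intervalIntegral.integral_comp_sub_left (a := s) (b := t) (fun u : ℝ => u⁻¹) 1
  rw [h, integral_inv, Real.log_div h2.ne' h1.ne']
  rw [Set.uIcc_of_le (by linarith)]
  intro hmem
  exact absurd hmem.1 (by linarith)

private lemma integral_one_sub_rpow {c : ℝ} (hc : 0 < c) :
    ∫ x in (0:ℝ)..1, (1 - x) ^ (c - 1) = 1 / c := by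
  have h := intervalIntegral.integral_comp_sub_left (a := (0:ℝ)) (b := 1)
    (fun u : ℝ => u ^ (c - 1)) 1
  simp only [sub_self, sub_zero] at h
  rw [h, integral_rpow (Or.inl (by linarith))]
  rw [sub_add_cancel, Real.one_rpow, Real.zero_rpow hc.ne']
  ring

private lemma intInt_one_sub_rpow {c : ℝ} (hc : 0 < c) :
    IntervalIntegrable (fun x : ℝ => (1 - x) ^ (c - 1)) volume 0 1 := by
  have h := (intervalIntegral.intervalIntegrable_rpow' (a := 0) (b := 1) (r := c - 1)
    (by linarith)).comp_sub_left 1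
  simpa using h.symm

section main

variable {a β δ : ℝ} {b : ℝ → ℝ}

private lemma f_intInt (hb_cont : Continuous b) {s t : ℝ} (hst : s ≤ t) (ht : t < 1) :
    IntervalIntegrable (fun y => b (a * β * y) / (1 - y)) volume s t := by
  apply ContinuousOn.intervalIntegrable
  apply ContinuousOn.div
  · exact (hb_cont.comp (by continuity)).continuousOn
  · exact (continuous_const.sub continuous_id).continuousOn
  · intro y hy
    rw [Set.uIcc_of_le hst] at hy
    have : y ≤ t := hy.2
    intro h
    nlinarith

private lemma cinv_intInt {C : ℝ} {s t : ℝ} (hst : s ≤ t) (ht : t < 1) :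
    IntervalIntegrable (fun y : ℝ => C * (1 - y)⁻¹) volume s t := by
  apply ContinuousOn.intervalIntegrable
  apply continuousOn_const.mul
  apply ContinuousOn.inv₀ (continuous_const.sub continuous_id).continuousOn
  intro y hy
  rw [Set.uIcc_of_le hst] at hy
  have : y ≤ t := hy.2
  intro h
  simp only [Pi.sub_apply, id_eq] at h
  nlinarith

private lemma f_nonneg (ha : 0 < a) (hβ : 0 < β) (hb_mono : MonotoneOn b (Set.Ici 0))
    (hb0 : 0 ≤ b 0) {y : ℝ} (hy0 : 0 ≤ y) (hy1 : y < 1) :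
    0 ≤ b (a * β * y) / (1 - y) := by
  have h1 : 0 ≤ a * β * y := by positivity
  have h2 : 0 ≤ b (a * β * y) := hb0.trans (hb_mono (Set.mem_Ici.2 le_rfl) (Set.mem_Ici.2 h1) h1)
  have h3 : (0:ℝ) < 1 - y := by linarith
  positivity

private lemma g_nonneg (ha : 0 < a) (hβ : 0 < β) (hb_cont : Continuous b)
    (hb_mono : MonotoneOn b (Set.Ici 0)) (hb0 : 0 ≤ b 0)
    {s t : ℝ} (hs : 0 ≤ s) (hst : s ≤ t) (ht : t < 1) :
    0 ≤ ∫ y in s..t, b (a * β * y) / (1 - y) := by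
  apply intervalIntegral.integral_nonneg hst
  intro y hy
  exact f_nonneg ha hβ hb_mono hb0 (hs.trans hy.1) (lt_of_le_of_lt hy.2 ht)

private lemma g_le (ha : 0 < a) (hβ : 0 < β) (hb_cont : Continuous b)
    (hb_mono : MonotoneOn b (Set.Ici 0))
    {x : ℝ} (hx0 : 0 ≤ x) (hx1 : x < 1) :
    (∫ y in (0:ℝ)..x, b (a * β * y) / (1 - y)) ≤ -(b (a * β) * Real.log (1 - x)) := by
  have key : (∫ y in (0:ℝ)..x, b (a * β * y) / (1 - y))
      ≤ ∫ y in (0:ℝ)..x, b (a * β) * (1 - y)⁻¹ := by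
    apply intervalIntegral.integral_mono_on hx0 (f_intInt hb_cont hx0 hx1)
      (cinv_intInt hx0 hx1)
    intro y hy
    have hy0 : 0 ≤ y := hy.1
    have hy1 : y < 1 := lt_of_le_of_lt hy.2 hx1
    have h3 : (0:ℝ) < 1 - y := by linarith
    rw [div_eq_mul_inv]
    apply mul_le_mul_of_nonneg_right _ (by positivity)
    apply hb_mono (Set.mem_Ici.2 (by positivity)) (Set.mem_Ici.2 (by positivity))
    nlinarith [mul_nonneg (mul_pos ha hβ).le h3.le]
  rw [intervalIntegral.integral_const_mul, integral_inv_one_sub hx0 hx1] at key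
  simpa [Real.log_one] using key

private lemma g_ge (ha : 0 < a) (hβ : 0 < β) (hb_cont : Continuous b)
    (hb_mono : MonotoneOn b (Set.Ici 0)) (hb0 : 0 ≤ b 0)
    (hδ0 : 0 < δ) {x : ℝ} (hδx : δ ≤ x) (hx1 : x < 1) :
    b (a * β * δ) * (Real.log (1 - δ) - Real.log (1 - x))
      ≤ ∫ y in (0:ℝ)..x, b (a * β * y) / (1 - y) := by
  have hsplit : (∫ y in (0:ℝ)..δ, b (a * β * y) / (1 - y))
      + (∫ y in δ..x, b (a * β * y) / (1 - y))
      = ∫ y in (0:ℝ)..x, b (a * β * y) / (1 - y) :=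
    intervalIntegral.integral_add_adjacent_intervals
      (f_intInt hb_cont hδ0.le (lt_of_le_of_lt hδx hx1)) (f_intInt hb_cont hδx hx1)
  have h1 : 0 ≤ ∫ y in (0:ℝ)..δ, b (a * β * y) / (1 - y) :=
    g_nonneg ha hβ hb_cont hb_mono hb0 le_rfl hδ0.le (lt_of_le_of_lt hδx hx1)
  have h2 : b (a * β * δ) * (Real.log (1 - δ) - Real.log (1 - x))
      ≤ ∫ y in δ..x, b (a * β * y) / (1 - y) := by
    have key : (∫ y in δ..x, b (a * β * δ) * (1 - y)⁻¹)
        ≤ ∫ y in δ..x, b (a * β * y) / (1 - y) := by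
      apply intervalIntegral.integral_mono_on hδx (cinv_intInt hδx hx1)
        (f_intInt hb_cont hδx hx1)
      intro y hy
      have hy0 : 0 < y := lt_of_lt_of_le hδ0 hy.1
      have hy1 : y < 1 := lt_of_le_of_lt hy.2 hx1
      have h3 : (0:ℝ) < 1 - y := by linarith
      rw [div_eq_mul_inv]
      apply mul_le_mul_of_nonneg_right _ (by positivity)
      apply hb_mono (Set.mem_Ici.2 (by positivity)) (Set.mem_Ici.2 (by positivity))
      nlinarith [mul_nonneg (mul_pos ha hβ).le (sub_nonneg.2 hy.1)]
    rw [intervalIntegral.integral_const_mul, integral_inv_one_sub hδx hx1] at key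
    exact key
  linarith

private lemma h_contOn (hb_cont : Continuous b) :
    ContinuousOn (fun x => (1 - x)⁻¹ *
      Real.exp (-∫ y in (0:ℝ)..x, b (a * β * y) / (1 - y))) (Set.Ioo 0 1) := by
  have gcont : ContinuousOn (fun x => ∫ y in (0:ℝ)..x, b (a * β * y) / (1 - y))
      (Set.Ioo 0 1) := by
    intro x hx
    set t := (x + 1) / 2 with ht_def
    have hxt : x < t := by rw [ht_def]; linarith [hx.2]
    have ht1 : t < 1 := by rw [ht_def]; linarith [hx.2]
    have ht0 : (0:ℝ) ≤ t := by rw [ht_def]; linarith [hx.1]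
    have hcont : ContinuousOn (fun x => ∫ y in (0:ℝ)..x, b (a * β * y) / (1 - y))
        (Set.uIcc 0 t) :=
      intervalIntegral.continuousOn_primitive_interval' (f_intInt hb_cont ht0 ht1)
        Set.left_mem_uIcc
    have hmem : Set.uIcc (0:ℝ) t ∈ nhdsWithin x (Set.Ioo 0 1) := by
      rw [Set.uIcc_of_le ht0]
      apply Filter.mem_of_superset
        (Filter.inter_mem self_mem_nhdsWithin
          (mem_nhdsWithin_of_mem_nhds (Iio_mem_nhds hxt)))
      intro y hy
      exact ⟨hy.1.1.le, hy.2.le⟩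
    exact (hcont.continuousWithinAt
      (by rw [Set.uIcc_of_le ht0]; exact ⟨hx.1.le, hxt.le⟩)).mono_of_mem_nhdsWithin hmem
  apply ContinuousOn.mul
  · apply ContinuousOn.inv₀ (continuous_const.sub continuous_id).continuousOn
    intro x hx
    simp only [Pi.sub_apply, id_eq]
    have := hx.2
    intro h; nlinarith
  · exact Real.continuous_exp.comp_continuousOn gcont.neg

private lemma h_le_M (ha : 0 < a) (hβ : 0 < β) (hb_cont : Continuous b)
    (hb_mono : MonotoneOn b (Set.Ici 0)) (hb0 : 0 ≤ b 0)
    (hb_pos : ∀ x > (0:ℝ), 0 < b x)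
    (hδ0 : 0 < δ) (hδ1 : δ < 1) {x : ℝ} (hx : x ∈ Set.Ioo (0:ℝ) 1) :
    (1 - x)⁻¹ * Real.exp (-∫ y in (0:ℝ)..x, b (a * β * y) / (1 - y))
      ≤ (1 - δ) ^ (-(b (a * β * δ))) * (1 - x) ^ (b (a * β * δ) - 1) := by
  set c₀ := b (a * β * δ) with hc₀_def
  have hc₀ : 0 < c₀ := hb_pos _ (by positivity)
  have h1x : (0:ℝ) < 1 - x := by linarith [hx.2]
  have h1δ : (0:ℝ) < 1 - δ := by linarith
  rcases le_or_gt x δ with hxδ | hδx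
  · -- x ≤ δ : use exp(-g) ≤ 1
    have hg : 0 ≤ ∫ y in (0:ℝ)..x, b (a * β * y) / (1 - y) :=
      g_nonneg ha hβ hb_cont hb_mono hb0 le_rfl hx.1.le hx.2
    have step1 : (1 - x)⁻¹ * Real.exp (-∫ y in (0:ℝ)..x, b (a * β * y) / (1 - y))
        ≤ (1 - x)⁻¹ := by
      nth_rewrite 2 [← mul_one (1 - x)⁻¹]
      apply mul_le_mul_of_nonneg_left _ (by positivity)
      rw [Real.exp_le_one_iff]
      linarith
    have step2 : (1 - x)⁻¹ ≤ (1 - δ) ^ (-c₀) * (1 - x) ^ (c₀ - 1) := by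
      have e1 : (1 - x)⁻¹ = (1 - x) ^ (-c₀) * (1 - x) ^ (c₀ - 1) := by
        rw [← Real.rpow_add h1x]
        have : -c₀ + (c₀ - 1) = -1 := by ring
        rw [this, Real.rpow_neg_one]
      rw [e1]
      apply mul_le_mul_of_nonneg_right _ (Real.rpow_nonneg h1x.le _)
      rw [Real.rpow_neg h1x.le, Real.rpow_neg h1δ.le]
      apply inv_anti₀ (Real.rpow_pos_of_pos h1δ _)
      exact Real.rpow_le_rpow h1δ.le (by linarith) hc₀.le
    linarith
  · -- δ < x : use g ≥ c₀ (log(1-δ) - log(1-x))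
    have hg := g_ge ha hβ hb_cont hb_mono hb0 hδ0 hδx.le hx.2
    rw [← hc₀_def] at hg
    have step1 : Real.exp (-∫ y in (0:ℝ)..x, b (a * β * y) / (1 - y))
        ≤ (1 - δ) ^ (-c₀) * (1 - x) ^ c₀ := by
      have e1 : (1 - δ) ^ (-c₀) * (1 - x) ^ c₀
          = Real.exp (-(c₀ * (Real.log (1 - δ) - Real.log (1 - x)))) := by
        rw [Real.rpow_def_of_pos h1δ, Real.rpow_def_of_pos h1x, ← Real.exp_add]
        ring_nf
      rw [e1, Real.exp_le_exp]
      linarith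
    have e2 : (1 - x) ^ (c₀ - 1) = (1 - x) ^ c₀ * (1 - x)⁻¹ := by
      rw [Real.rpow_sub h1x, Real.rpow_one, div_eq_mul_inv]
    calc (1 - x)⁻¹ * Real.exp (-∫ y in (0:ℝ)..x, b (a * β * y) / (1 - y))
        ≤ (1 - x)⁻¹ * ((1 - δ) ^ (-c₀) * (1 - x) ^ c₀) :=
          mul_le_mul_of_nonneg_left step1 (by positivity)
      _ = (1 - δ) ^ (-c₀) * (1 - x) ^ (c₀ - 1) := by rw [e2]; ring

private lemma h_ge_m (ha : 0 < a) (hβ : 0 < β) (hb_cont : Continuous b)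
    (hb_mono : MonotoneOn b (Set.Ici 0))
    {x : ℝ} (hx : x ∈ Set.Ioo (0:ℝ) 1) :
    (1 - x) ^ (b (a * β) - 1)
      ≤ (1 - x)⁻¹ * Real.exp (-∫ y in (0:ℝ)..x, b (a * β * y) / (1 - y)) := by
  set c := b (a * β) with hc_def
  have h1x : (0:ℝ) < 1 - x := by linarith [hx.2]
  have hg := g_le ha hβ hb_cont hb_mono hx.1.le hx.2
  rw [← hc_def] at hg
  have e2 : (1 - x) ^ (c - 1) = (1 - x)⁻¹ * (1 - x) ^ c := by
    rw [Real.rpow_sub h1x, Real.rpow_one, div_eq_mul_inv]; ring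
  rw [e2]
  apply mul_le_mul_of_nonneg_left _ (by positivity)
  rw [Real.rpow_def_of_pos h1x, Real.exp_le_exp]
  nlinarith [hg]

private lemma h_intInt (ha : 0 < a) (hβ : 0 < β) (hb_cont : Continuous b)
    (hb_mono : MonotoneOn b (Set.Ici 0)) (hb0 : 0 ≤ b 0)
    (hb_pos : ∀ x > (0:ℝ), 0 < b x) :
    IntervalIntegrable (fun x => (1 - x)⁻¹ *
      Real.exp (-∫ y in (0:ℝ)..x, b (a * β * y) / (1 - y))) volume 0 1 := by
  set c₀ := b (a * β * (1/2)) with hc₀_def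
  have hc₀ : 0 < c₀ := hb_pos _ (by positivity)
  rw [intervalIntegrable_iff_integrableOn_Ioc_of_le zero_le_one]
  have hrestr : volume.restrict (Set.Ioc (0:ℝ) 1) = volume.restrict (Set.Ioo (0:ℝ) 1) :=
    (Measure.restrict_congr_set Ioo_ae_eq_Ioc).symm
  have hM : IntegrableOn (fun x : ℝ => (1 - (1/2:ℝ)) ^ (-c₀) * (1 - x) ^ (c₀ - 1))
      (Set.Ioc 0 1) volume := by
    rw [← intervalIntegrable_iff_integrableOn_Ioc_of_le zero_le_one]
    exact (intInt_one_sub_rpow hc₀).const_mul _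
  apply hM.mono'
  · show AEStronglyMeasurable _ (volume.restrict (Set.Ioc (0:ℝ) 1))
    rw [hrestr]
    exact (h_contOn hb_cont).aestronglyMeasurable measurableSet_Ioo
  · rw [hrestr]
    filter_upwards [ae_restrict_mem measurableSet_Ioo] with x hx
    have h1x : (0:ℝ) < 1 - x := by linarith [hx.2]
    rw [Real.norm_eq_abs, abs_of_nonneg (by positivity)]
    exact h_le_M ha hβ hb_cont hb_mono hb0 hb_pos (by norm_num) (by norm_num) hx

private lemma ae_Ioo_of_Icc :
    ∀ᵐ x ∂(volume.restrict (Set.Icc (0:ℝ) 1)), x ∈ Set.Icc (0:ℝ) 1 → x = 0 ∨ x = 1 ∨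
      x ∈ Set.Ioo (0:ℝ) 1 := by
  filter_upwards with x hx
  rcases eq_or_lt_of_le hx.1 with h0 | h0
  · exact Or.inl h0.symm
  rcases eq_or_lt_of_le hx.2 with h1 | h1
  · exact Or.inr (Or.inl h1)
  exact Or.inr (Or.inr ⟨h0, h1⟩)

private lemma Cfun_le (ha : 0 < a) (hβ : 0 < β) (hb_cont : Continuous b)
    (hb_mono : MonotoneOn b (Set.Ici 0)) (hb0 : 0 ≤ b 0)
    (hb_pos : ∀ x > (0:ℝ), 0 < b x) (hδ0 : 0 < δ) (hδ1 : δ < 1) :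
    Cfun a b β ≤ (1 - δ) ^ (-(b (a * β * δ))) * (1 / b (a * β * δ)) := by
  set c₀ := b (a * β * δ) with hc₀_def
  have hc₀ : 0 < c₀ := hb_pos _ (by positivity)
  have key : Cfun a b β ≤ ∫ x in (0:ℝ)..1, (1 - δ) ^ (-c₀) * (1 - x) ^ (c₀ - 1) := by
    apply intervalIntegral.integral_mono_ae_restrict zero_le_one
      (h_intInt ha hβ hb_cont hb_mono hb0 hb_pos)
      ((intInt_one_sub_rpow hc₀).const_mul _)
    have hne : ∀ᵐ x ∂(volume.restrict (Set.Icc (0:ℝ) 1)), x ≠ 0 ∧ x ≠ 1 := by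
      apply ae_restrict_of_ae
      have h0 : ∀ᵐ x ∂(volume : Measure ℝ), x ≠ 0 := by
        exact compl_mem_ae_iff.2 (measure_singleton (0:ℝ))
      have h1 : ∀ᵐ x ∂(volume : Measure ℝ), x ≠ 1 := by
        exact compl_mem_ae_iff.2 (measure_singleton (1:ℝ))
      filter_upwards [h0, h1] with x hx0 hx1
      exact ⟨hx0, hx1⟩
    filter_upwards [ae_restrict_mem measurableSet_Icc, hne] with x hx hxne
    have hx' : x ∈ Set.Ioo (0:ℝ) 1 :=
      ⟨lt_of_le_of_ne hx.1 (Ne.symm hxne.1), lt_of_le_of_ne hx.2 hxne.2⟩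
    exact h_le_M ha hβ hb_cont hb_mono hb0 hb_pos hδ0 hδ1 hx'
  rwa [intervalIntegral.integral_const_mul, integral_one_sub_rpow hc₀] at key

private lemma Cfun_ge (ha : 0 < a) (hβ : 0 < β) (hb_cont : Continuous b)
    (hb_mono : MonotoneOn b (Set.Ici 0)) (hb0 : 0 ≤ b 0)
    (hb_pos : ∀ x > (0:ℝ), 0 < b x) :
    1 / b (a * β) ≤ Cfun a b β := by
  set c := b (a * β) with hc_def
  have hc : 0 < c := hb_pos _ (by positivity)
  have key : (∫ x in (0:ℝ)..1, (1 - x) ^ (c - 1)) ≤ Cfun a b β := by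
    apply intervalIntegral.integral_mono_ae_restrict zero_le_one
      (intInt_one_sub_rpow hc)
      (h_intInt ha hβ hb_cont hb_mono hb0 hb_pos)
    have hne : ∀ᵐ x ∂(volume.restrict (Set.Icc (0:ℝ) 1)), x ≠ 0 ∧ x ≠ 1 := by
      apply ae_restrict_of_ae
      have h0 : ∀ᵐ x ∂(volume : Measure ℝ), x ≠ 0 := by
        exact compl_mem_ae_iff.2 (measure_singleton (0:ℝ))
      have h1 : ∀ᵐ x ∂(volume : Measure ℝ), x ≠ 1 := by
        exact compl_mem_ae_iff.2 (measure_singleton (1:ℝ))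
      filter_upwards [h0, h1] with x hx0 hx1
      exact ⟨hx0, hx1⟩
    filter_upwards [ae_restrict_mem measurableSet_Icc, hne] with x hx hxne
    have hx' : x ∈ Set.Ioo (0:ℝ) 1 :=
      ⟨lt_of_le_of_ne hx.1 (Ne.symm hxne.1), lt_of_le_of_ne hx.2 hxne.2⟩
    exact h_ge_m ha hβ hb_cont hb_mono hx'
  rwa [integral_one_sub_rpow hc] at key

end main

private lemma tendsto_scale {a δ : ℝ} (ha : 0 < a) (hδ0 : 0 < δ) :
    Tendsto (fun β : ℝ => a * β * δ) (nhdsWithin 0 (Set.Ioi 0)) (nhdsWithin 0 (Set.Ioi 0)) := by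
  apply tendsto_nhdsWithin_of_tendsto_nhds_of_eventually_within
  · have hc : Continuous (fun β : ℝ => a * β * δ) := by continuity
    have h := hc.tendsto 0
    simpa using h.mono_left nhdsWithin_le_nhds
  · filter_upwards [self_mem_nhdsWithin] with β hβ
    exact mul_pos (mul_pos ha hβ) hδ0

private lemma tendsto_beta_div {a : ℝ} (ha : 0 < a) (b : ℝ → ℝ) {lam : ℝ} (hlam : 0 < lam)
    (hslope : Tendsto (fun x => b x / x) (nhdsWithin 0 (Set.Ioi 0)) (nhds lam))
    {δ : ℝ} (hδ0 : 0 < δ) :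
    Tendsto (fun β => β / b (a * β * δ)) (nhdsWithin 0 (Set.Ioi 0))
      (nhds (1 / (lam * (a * δ)))) := by
  have h1 : Tendsto (fun β => b (a * β * δ) / β) (nhdsWithin 0 (Set.Ioi 0))
      (nhds (lam * (a * δ))) := by
    have h2 := (hslope.comp (tendsto_scale ha hδ0)).mul
      (tendsto_const_nhds (x := a * δ) (f := nhdsWithin (0:ℝ) (Set.Ioi 0)))
    apply h2.congr'
    filter_upwards [self_mem_nhdsWithin] with β hβ
    have hβ0 : (0:ℝ) < β := hβ
    simp only [Function.comp]
    field_simp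
  have h3 := h1.inv₀ (by positivity)
  rw [show (lam * (a * δ))⁻¹ = 1 / (lam * (a * δ)) by rw [one_div]] at h3
  apply h3.congr
  intro β
  rw [inv_div]

private lemma b_tendsto_zero (b : ℝ → ℝ) {lam : ℝ}
    (hslope : Tendsto (fun x => b x / x) (nhdsWithin 0 (Set.Ioi 0)) (nhds lam)) :
    Tendsto b (nhdsWithin 0 (Set.Ioi 0)) (nhds 0) := by
  have hid : Tendsto (fun x : ℝ => x) (nhdsWithin 0 (Set.Ioi 0)) (nhds 0) :=
    tendsto_id.mono_right nhdsWithin_le_nhds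
  have h2 := hslope.mul hid
  rw [mul_zero] at h2
  apply h2.congr'
  filter_upwards [self_mem_nhdsWithin] with x hx
  exact div_mul_cancel₀ _ (ne_of_gt hx)

private lemma rpow_tendsto_one {a δ : ℝ} (ha : 0 < a) (hδ0 : 0 < δ) (hδ1 : δ < 1)
    (b : ℝ → ℝ) {lam : ℝ}
    (hslope : Tendsto (fun x => b x / x) (nhdsWithin 0 (Set.Ioi 0)) (nhds lam)) :
    Tendsto (fun β => (1 - δ) ^ (-(b (a * β * δ)))) (nhdsWithin 0 (Set.Ioi 0)) (nhds 1) := by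
  have hbase : (0:ℝ) < 1 - δ := by linarith
  have hcont : Tendsto (fun t : ℝ => (1 - δ) ^ (-t)) (nhds 0) (nhds 1) := by
    have he : (fun t : ℝ => (1 - δ) ^ (-t)) = fun t => Real.exp (Real.log (1 - δ) * (-t)) := by
      funext t; rw [Real.rpow_def_of_pos hbase]
    rw [he]
    have hc : Continuous fun t : ℝ => Real.exp (Real.log (1 - δ) * (-t)) := by fun_prop
    have := hc.tendsto 0
    simpa using this
  exact hcont.comp ((b_tendsto_zero b hslope).comp (tendsto_scale ha hδ0))

/-- if `b(x)/x → λ ∈ (0,∞)` as `x → 0⁺`, then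
`β C(β) → 1/(λ a)` as `β → 0⁺`. -/
theorem betaC_tendsto_of_slope_finite
    (a : ℝ) (ha : 0 < a) (b : ℝ → ℝ)
    (hb_cont : Continuous b) (hb_mono : MonotoneOn b (Set.Ici 0))
    (hb0 : 0 ≤ b 0) (hb_pos : ∀ x > (0:ℝ), 0 < b x)
    (lam : ℝ) (hlam : 0 < lam)
    (hslope : Tendsto (fun x => b x / x) (nhdsWithin 0 (Set.Ioi 0)) (nhds lam)) :
    Tendsto (fun β => β * Cfun a b β) (nhdsWithin 0 (Set.Ioi 0))
      (nhds (1 / (lam * a))) := by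
  set L := 1 / (lam * a) with hL
  have hLpos : 0 < L := by rw [hL]; positivity
  rw [Metric.tendsto_nhds]
  intro ε hε
  -- the lower bound tendsto
  have hlow : Tendsto (fun β => β / b (a * β)) (nhdsWithin 0 (Set.Ioi 0)) (nhds L) := by
    have h := tendsto_beta_div ha b hlam hslope one_pos
    simpa [hL] using h
  -- choose δ close to 1
  set δ := (L / (L + ε / 2) + 1) / 2 with hδdef
  have hεL : (0:ℝ) < L + ε / 2 := by linarith
  have hδ0 : 0 < δ := by rw [hδdef]; positivity
  have hfrac : L / (L + ε / 2) < 1 := (div_lt_one hεL).2 (by linarith)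
  have hδ1 : δ < 1 := by rw [hδdef]; linarith
  have hδgt : L / (L + ε / 2) < δ := by rw [hδdef]; linarith
  have hLδ : L / δ < L + ε / 2 := by
    rw [div_lt_iff₀ hδ0]
    have h := (div_lt_iff₀ hεL).1 hδgt
    nlinarith
  -- the upper bound tendsto
  have hup : Tendsto (fun β => (1 - δ) ^ (-(b (a * β * δ))) * (β / b (a * β * δ)))
      (nhdsWithin 0 (Set.Ioi 0)) (nhds (L / δ)) := by
    have h := (rpow_tendsto_one ha hδ0 hδ1 b hslope).mul
      (tendsto_beta_div ha b hlam hslope hδ0)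
    have hval : 1 * (1 / (lam * (a * δ))) = L / δ := by
      rw [hL]; field_simp
    rwa [hval] at h
  have hev_up : ∀ᶠ β in nhdsWithin 0 (Set.Ioi 0),
      (1 - δ) ^ (-(b (a * β * δ))) * (β / b (a * β * δ)) < L + ε :=
    hup.eventually_lt_const (by linarith)
  have hev_low : ∀ᶠ β in nhdsWithin 0 (Set.Ioi 0), L - ε < β / b (a * β) :=
    hlow.eventually_const_lt (by linarith)
  filter_upwards [hev_up, hev_low, self_mem_nhdsWithin] with β h1 h2 hβ
  have hβ0 : (0:ℝ) < β := hβ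
  have hCle := Cfun_le (δ := δ) ha hβ0 hb_cont hb_mono hb0 hb_pos hδ0 hδ1
  have hCge := Cfun_ge ha hβ0 hb_cont hb_mono hb0 hb_pos
  have hb2 : 0 < b (a * β * δ) := hb_pos _ (by positivity)
  have hβC_ge : β / b (a * β) ≤ β * Cfun a b β := by
    rw [div_eq_mul_one_div]
    exact mul_le_mul_of_nonneg_left hCge hβ0.le
  have hβC_le : β * Cfun a b β ≤ (1 - δ) ^ (-(b (a * β * δ))) * (β / b (a * β * δ)) := by
    calc β * Cfun a b β
        ≤ β * ((1 - δ) ^ (-(b (a * β * δ))) * (1 / b (a * β * δ))) :=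
          mul_le_mul_of_nonneg_left hCle hβ0.le
      _ = (1 - δ) ^ (-(b (a * β * δ))) * (β / b (a * β * δ)) := by ring
  rw [Real.dist_eq, abs_lt]
  constructor
  · linarith
  · linarith
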